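/- Let Φ be a complex N×N matrix whose powers are uniformly bounded, i.e. there exists C ≥ 0 such that every entry of Φ^m has absolute value at most C for all m ∈ ℕ (this holds in particular when Φ is the superoperator matrix of a quantum channel). Then there exists a matrix P with P·P = P, Φ·P = P and P·Φ = P, such that Matrix.exp(t • (Φ − 1)) converges to P as t → ∞, i.e. Tendsto (fun t : ℝ => Matrix.exp (t • (Φ − 1))) atTop (𝓝 P). (P is the projection onto the subspace of vectors fixed by Φ.) -/

import Mathlib

open Filter NormedSpace
open scoped Nat

namespace SCP

/-- `t^n/n!` -/
noncomputable def ee (t : ℝ) (n : ℕ) : ℝ := t ^ n / n !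

/-- Poisson weight -/
noncomputable def pois (t : ℝ) (n : ℕ) : ℝ := Real.exp (-t) * ee t n

theorem summable_ee (t : ℝ) : Summable (ee t) := Real.summable_pow_div_factorial t

theorem tsum_ee (t : ℝ) : ∑' n, ee t n = Real.exp t := by
  rw [Real.exp_eq_exp_ℝ, exp_eq_tsum_div]
  rfl

theorem ee_nonneg {t : ℝ} (ht : 0 ≤ t) (n : ℕ) : 0 ≤ ee t n :=
  div_nonneg (pow_nonneg ht n) (by positivity)

theorem pois_nonneg {t : ℝ} (ht : 0 ≤ t) (n : ℕ) : 0 ≤ pois t n :=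
  mul_nonneg (Real.exp_pos _).le (ee_nonneg ht n)

theorem summable_pois (t : ℝ) : Summable (pois t) := (summable_ee t).mul_left _

theorem tsum_pois (t : ℝ) : ∑' n, pois t n = 1 := by
  unfold pois
  rw [tsum_mul_left, tsum_ee, ← Real.exp_add]
  simp

theorem ee_succ (t : ℝ) (n : ℕ) : ((n:ℝ) + 1) * ee t (n + 1) = t * ee t n := by
  unfold ee
  rw [Nat.factorial_succ]
  have h1 : ((n !:ℝ)) ≠ 0 := Nat.cast_ne_zero.mpr (Nat.factorial_ne_zero n)
  push_cast
  field_simp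
  ring

theorem summable_mom1 (t : ℝ) : Summable (fun n : ℕ => (n : ℝ) * ee t n) := by
  rw [← summable_nat_add_iff 1]
  have : (fun n : ℕ => ((n : ℕ) + 1 : ℝ) * ee t (n + 1)) = fun n : ℕ => t * ee t n := by
    funext n; exact_mod_cast ee_succ t n
  simpa [this] using (summable_ee t).mul_left t

theorem tsum_mom1 (t : ℝ) : ∑' n : ℕ, (n : ℝ) * ee t n = t * Real.exp t := by
  rw [Summable.tsum_eq_zero_add (summable_mom1 t)]
  have : (fun n : ℕ => ((n + 1 : ℕ) : ℝ) * ee t (n + 1)) = fun n : ℕ => t * ee t n := by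
    funext n; exact_mod_cast ee_succ t n
  simp only [this, Nat.cast_zero, zero_mul, zero_add]
  rw [tsum_mul_left, tsum_ee]

theorem mom2_key (t : ℝ) (n : ℕ) :
    (((n:ℕ) + 1 : ℝ)) ^ 2 * ee t (n + 1) = t * ((n:ℝ) * ee t n) + t * ee t n := by
  have h2 : (((n:ℕ) + 1 : ℝ)) ^ 2 * ee t (n + 1) = ((n:ℝ)+1) * (((n:ℝ)+1) * ee t (n+1)) := by
    push_cast; ring
  rw [h2, ee_succ t n]
  ring

theorem summable_mom2 (t : ℝ) : Summable (fun n : ℕ => (n : ℝ) ^ 2 * ee t n) := by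
  rw [← summable_nat_add_iff 1]
  have : (fun n : ℕ => ((n + 1 : ℕ) : ℝ) ^ 2 * ee t (n + 1)) =
      fun n : ℕ => t * ((n:ℝ) * ee t n) + t * ee t n := by
    funext n
    have := mom2_key t n
    push_cast at this ⊢
    exact this
  rw [this]
  exact ((summable_mom1 t).mul_left t).add ((summable_ee t).mul_left t)

theorem tsum_mom2 (t : ℝ) : ∑' n : ℕ, (n : ℝ) ^ 2 * ee t n = (t ^ 2 + t) * Real.exp t := by
  rw [Summable.tsum_eq_zero_add (summable_mom2 t)]
  have h : (fun n : ℕ => ((n + 1 : ℕ) : ℝ) ^ 2 * ee t (n + 1)) =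
      fun n : ℕ => t * ((n:ℝ) * ee t n) + t * ee t n := by
    funext n
    have := mom2_key t n
    push_cast at this ⊢
    exact this
  simp only [h, Nat.cast_zero, zero_pow, zero_mul, zero_add]
  rw [Summable.tsum_add ((summable_mom1 t).mul_left t) ((summable_ee t).mul_left t),
    tsum_mul_left, tsum_mul_left, tsum_mom1, tsum_ee]
  ring

theorem tsum_var (t : ℝ) : ∑' n : ℕ, pois t n * ((n : ℝ) - t) ^ 2 = t := by
  have hfun : (fun n : ℕ => pois t n * ((n:ℝ) - t)^2) =
      fun n : ℕ => Real.exp (-t) * ((n:ℝ)^2 * ee t n) -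
        (2*t*Real.exp (-t)) * ((n:ℝ) * ee t n) + (t^2 * Real.exp (-t)) * ee t n := by
    funext n; unfold pois; ring
  rw [hfun,
    Summable.tsum_add
      ((((summable_mom2 t).mul_left _)).sub ((summable_mom1 t).mul_left _))
      ((summable_ee t).mul_left _),
    Summable.tsum_sub ((summable_mom2 t).mul_left _) ((summable_mom1 t).mul_left _),
    tsum_mul_left, tsum_mul_left, tsum_mul_left, tsum_mom2, tsum_mom1, tsum_ee]
  rw [Real.exp_neg]
  have := (Real.exp_pos t).ne'
  field_simp
  ring

theorem summable_absdev {t : ℝ} (ht : 0 ≤ t) :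
    Summable (fun n : ℕ => pois t n * |(n:ℝ) - t|) := by
  have hvar : Summable (fun n : ℕ => pois t n * ((n:ℝ) - t)^2 + pois t n) := by
    have h1 : Summable (fun n : ℕ => pois t n * ((n:ℝ) - t)^2) := by
      have hfun : (fun n : ℕ => pois t n * ((n:ℝ) - t)^2) =
          fun n : ℕ => Real.exp (-t) * ((n:ℝ)^2 * ee t n) -
            (2*t*Real.exp (-t)) * ((n:ℝ) * ee t n) + (t^2 * Real.exp (-t)) * ee t n := by
        funext n; unfold pois; ring
      rw [hfun]
      exact ((((summable_mom2 t).mul_left _)).sub ((summable_mom1 t).mul_left _)).add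
        ((summable_ee t).mul_left _)
    exact h1.add (summable_pois t)
  apply Summable.of_nonneg_of_le
    (fun n => mul_nonneg (pois_nonneg ht n) (abs_nonneg _)) (fun n => ?_) hvar
  have habs : |(n:ℝ) - t| ≤ ((n:ℝ) - t)^2 + 1 := by
    rcases le_or_gt (|(n:ℝ) - t|) 1 with h | h
    · nlinarith [abs_nonneg ((n:ℝ) - t)]
    · nlinarith [sq_abs ((n:ℝ) - t), abs_nonneg ((n:ℝ) - t)]
  calc pois t n * |(n:ℝ) - t| ≤ pois t n * (((n:ℝ) - t)^2 + 1) := by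
        exact mul_le_mul_of_nonneg_left habs (pois_nonneg ht n)
    _ = pois t n * ((n:ℝ) - t)^2 + pois t n := by ring

theorem tsum_absdev {t : ℝ} (ht : 1 ≤ t) :
    ∑' n : ℕ, pois t n * |(n:ℝ) - t| ≤ Real.sqrt t := by
  have ht0 : (0:ℝ) < t := lt_of_lt_of_le one_pos ht
  have hs : (0:ℝ) < Real.sqrt t := Real.sqrt_pos.mpr ht0
  have hb : ∀ n : ℕ, pois t n * |(n:ℝ) - t| ≤
      (pois t n * ((n:ℝ) - t)^2 + t * pois t n) * (2 * Real.sqrt t)⁻¹ := by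
    intro n
    have key : 2 * Real.sqrt t * |(n:ℝ) - t| ≤ ((n:ℝ) - t)^2 + t := by
      have h1 : (|(n:ℝ) - t| - Real.sqrt t)^2 ≥ 0 := sq_nonneg _
      have h2 : Real.sqrt t ^ 2 = t := Real.sq_sqrt ht0.le
      nlinarith [sq_abs ((n:ℝ) - t)]
    have hp := pois_nonneg ht0.le n
    have h2s : (0:ℝ) < 2 * Real.sqrt t := by positivity
    rw [← mul_le_mul_iff_left₀ h2s]
    have hinv : (pois t n * ((n:ℝ) - t)^2 + t * pois t n) * (2 * Real.sqrt t)⁻¹ *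
        (2 * Real.sqrt t) = pois t n * ((n:ℝ) - t)^2 + t * pois t n := by
      field_simp
    rw [hinv]
    nlinarith [mul_le_mul_of_nonneg_left key hp]
  have hsum2 : Summable (fun n : ℕ => (pois t n * ((n:ℝ) - t)^2 + t * pois t n) *
      (2 * Real.sqrt t)⁻¹) := by
    apply Summable.mul_right
    have h1 : Summable (fun n : ℕ => pois t n * ((n:ℝ) - t)^2) := by
      have hfun : (fun n : ℕ => pois t n * ((n:ℝ) - t)^2) =
          fun n : ℕ => Real.exp (-t) * ((n:ℝ)^2 * ee t n) -
            (2*t*Real.exp (-t)) * ((n:ℝ) * ee t n) + (t^2 * Real.exp (-t)) * ee t n := by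
        funext n; unfold pois; ring
      rw [hfun]
      exact ((((summable_mom2 t).mul_left _)).sub ((summable_mom1 t).mul_left _)).add
        ((summable_ee t).mul_left _)
    exact h1.add ((summable_pois t).mul_left t)
  calc ∑' n : ℕ, pois t n * |(n:ℝ) - t|
      ≤ ∑' n : ℕ, (pois t n * ((n:ℝ) - t)^2 + t * pois t n) * (2 * Real.sqrt t)⁻¹ :=
        Summable.tsum_le_tsum hb (summable_absdev ht0.le) hsum2
    _ = (t + t * 1) * (2 * Real.sqrt t)⁻¹ := by
        rw [tsum_mul_right, Summable.tsum_add (by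
          have hfun : (fun n : ℕ => pois t n * ((n:ℝ) - t)^2) =
              fun n : ℕ => Real.exp (-t) * ((n:ℝ)^2 * ee t n) -
                (2*t*Real.exp (-t)) * ((n:ℝ) * ee t n) + (t^2 * Real.exp (-t)) * ee t n := by
            funext n; unfold pois; ring
          rw [hfun]
          exact ((((summable_mom2 t).mul_left _)).sub ((summable_mom1 t).mul_left _)).add
            ((summable_ee t).mul_left _)) ((summable_pois t).mul_left t),
          tsum_var, tsum_mul_left, tsum_pois]
    _ = Real.sqrt t := by
        rw [mul_one, show t + t = 2 * t by ring, mul_inv,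
          show 2 * t * (2⁻¹ * (Real.sqrt t)⁻¹) = t / Real.sqrt t by ring]
        exact Real.div_sqrt


/-- complex Poisson coefficient -/
noncomputable def cc (t : ℝ) (n : ℕ) : ℂ := Complex.exp (-(t:ℂ)) * ((t : ℂ) ^ n / n !)

theorem abs_cc {t : ℝ} (ht : 0 ≤ t) (n : ℕ) : ‖cc t n‖ = pois t n := by
  unfold cc pois ee
  rw [norm_mul, norm_div, ← Complex.ofReal_neg, Complex.norm_exp_ofReal, norm_pow]
  simp [abs_of_nonneg ht]

theorem cc_real (t : ℝ) (n : ℕ) : cc t n = ((Real.exp (-t) * (t ^ n / n !) : ℝ) : ℂ) := by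
  unfold cc
  push_cast [Complex.ofReal_exp]
  ring

theorem summable_cc (t : ℝ) : Summable (cc t) := by
  apply Summable.of_norm
  have h : (fun n => ‖cc t n‖) = fun n : ℕ => Real.exp (-t) * (|t| ^ n / n !) := by
    funext n
    unfold cc
    rw [norm_mul, norm_div, ← Complex.ofReal_neg,
      Complex.norm_exp_ofReal, norm_pow]
    simp
  rw [h]
  exact (Real.summable_pow_div_factorial |t|).mul_left _

theorem pois_diff {t : ℝ} (ht : 0 < t) (n : ℕ) :
    pois t n - pois t (n+1) = pois t (n+1) * (((n:ℝ)+1) - t) / t := by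
  unfold pois ee
  rw [Nat.factorial_succ]
  have h1 : ((n !:ℝ)) ≠ 0 := Nat.cast_ne_zero.mpr (Nat.factorial_ne_zero n)
  push_cast
  field_simp
  ring

theorem tsum_cc (t : ℝ) : ∑' n, cc t n = 1 := by
  unfold cc
  rw [tsum_mul_left]
  have : ∑' n : ℕ, ((t:ℂ) ^ n / n !) = Complex.exp (t:ℂ) := by
    rw [Complex.exp_eq_exp_ℂ, exp_eq_tsum_div]
  rw [this, ← Complex.exp_add]
  simp

section Matrices

attribute [local instance] Matrix.linftyOpNormedRing Matrix.linftyOpNormedAlgebra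

variable {N : ℕ}

local notation "Mat" => Matrix (Fin N) (Fin N) ℂ

theorem norm_entrywise_le {M : Mat} {c : ℝ} (hc : 0 ≤ c)
    (h : ∀ i j, ‖M i j‖ ≤ c) : ‖M‖ ≤ N * c := by
  rw [Matrix.linfty_opNorm_def]
  have hNc : (0:ℝ) ≤ N * c := by positivity
  have key : (Finset.univ : Finset (Fin N)).sup (fun i => ∑ j, ‖M i j‖₊) ≤
      (N * c).toNNReal := by
    apply Finset.sup_le
    intro i _
    rw [← NNReal.coe_le_coe, NNReal.coe_sum, Real.coe_toNNReal _ hNc]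
    calc ∑ j, (‖M i j‖₊ : ℝ) = ∑ j, ‖M i j‖ := by norm_num
      _ ≤ ∑ _j : Fin N, c := Finset.sum_le_sum (fun j _ => by
          exact h i j)
      _ = N * c := by simp [mul_comm]
  calc ((Finset.univ.sup (fun i => ∑ j, ‖M i j‖₊) : NNReal) : ℝ)
      ≤ ((N * c).toNNReal : ℝ) := NNReal.coe_le_coe.mpr key
    _ = N * c := Real.coe_toNNReal _ hNc

theorem summable_cc_smul (Φ : Mat) (t : ℝ) : Summable (fun n => cc t n • Φ ^ n) := by
  have h := (expSeries_summable' (𝕂 := ℂ) ((t : ℂ) • Φ)).const_smul (Complex.exp (-(t:ℂ)))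
  refine h.congr (fun n => (?_ : cc t n • Φ ^ n = _).symm)
  simp only [smul_pow, smul_smul, cc]
  congr 1
  field_simp

/-- the explicit series form of the semigroup -/
noncomputable def F (Φ : Mat) (t : ℝ) : Mat := ∑' n : ℕ, cc t n • Φ ^ n

theorem repr_exp (Φ : Mat) (t : ℝ) :
    exp (t • (Φ - 1)) = F Φ t := by
  have hsmul : t • (Φ - 1) = (t : ℂ) • Φ + (-(t:ℂ)) • 1 := by
    rw [smul_sub, neg_smul, ← sub_eq_add_neg]
    congr 1 <;> exact (Complex.coe_smul t _).symm ▸ rfl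
  have hadd : exp ((t : ℂ) • Φ + (-(t:ℂ)) • (1:Mat)) =
      exp ((t : ℂ) • Φ) * exp ((-(t:ℂ)) • (1:Mat)) :=
    Matrix.exp_add_of_commute _ _ (((Commute.one_right Φ).smul_left _).smul_right _)
  have h1 : exp ((-(t:ℂ)) • (1 : Mat)) = Complex.exp (-(t:ℂ)) • (1 : Mat) := by
    rw [← Algebra.algebraMap_eq_smul_one, ← Algebra.algebraMap_eq_smul_one, Complex.exp_eq_exp_ℂ]
    exact (algebraMap_exp_comm _).symm
  have h2 : exp ((t : ℂ) • Φ) = ∑' n : ℕ, ((n !⁻¹ : ℂ)) • ((t:ℂ) • Φ) ^ n := by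
    rw [exp_eq_tsum (𝕂 := ℂ)]
  rw [hsmul, hadd, h1, mul_smul_comm, mul_one, h2]
  erw [← Summable.tsum_const_smul _ (expSeries_summable' (𝕂 := ℂ) ((t : ℂ) • Φ))]
  unfold F
  congr 1 with n
  simp only [smul_pow, smul_smul, cc]
  congr 1
  field_simp

end Matrices


section Matrices2

attribute [local instance] Matrix.linftyOpNormedRing Matrix.linftyOpNormedAlgebra

variable {N : ℕ}

local notation "Mat" => Matrix (Fin N) (Fin N) ℂ

theorem norm_F_le {Φ : Mat} {K : ℝ} (hK0 : 0 ≤ K) (hK : ∀ m : ℕ, ‖Φ ^ m‖ ≤ K)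
    {t : ℝ} (ht : 0 ≤ t) : ‖F Φ t‖ ≤ K := by
  have hb : ∀ n : ℕ, ‖cc t n • Φ ^ n‖ ≤ pois t n * K := by
    intro n
    rw [norm_smul, abs_cc ht]
    exact mul_le_mul (le_refl _) (hK n) (norm_nonneg _) (pois_nonneg ht n)
  have hbs : Summable (fun n : ℕ => pois t n * K) := (summable_pois t).mul_right K
  have hns : Summable (fun n : ℕ => ‖cc t n • Φ ^ n‖) :=
    Summable.of_nonneg_of_le (fun n => norm_nonneg _) hb hbs
  calc ‖F Φ t‖ ≤ ∑' n : ℕ, ‖cc t n • Φ ^ n‖ := norm_tsum_le_tsum_norm hns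
    _ ≤ ∑' n : ℕ, pois t n * K := Summable.tsum_le_tsum hb hns hbs
    _ = (∑' n : ℕ, pois t n) * K := tsum_mul_right
    _ = K := by rw [tsum_pois, one_mul]

theorem comm_F (Φ : Mat) (t : ℝ) : Φ * F Φ t = F Φ t * Φ := by
  unfold F
  rw [← Summable.tsum_mul_left Φ (summable_cc_smul Φ t),
    ← Summable.tsum_mul_right Φ (summable_cc_smul Φ t)]
  congr 1 with n
  rw [mul_smul_comm, smul_mul_assoc, ← pow_succ, ← pow_succ']

set_option maxHeartbeats 1000000 in
theorem tendsto_F_mul_sub {Φ : Mat} {K : ℝ} (hK1 : 1 ≤ K) (hK : ∀ m : ℕ, ‖Φ ^ m‖ ≤ K) :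
    Tendsto (fun t : ℝ => F Φ t * Φ - F Φ t) atTop (nhds 0) := by
  have hK0 : (0:ℝ) ≤ K := zero_le_one.trans hK1
  have key : ∀ t : ℝ, 1 ≤ t → ‖F Φ t * Φ - F Φ t‖ ≤ 2 * K / Real.sqrt t := by
    intro t ht
    have ht0 : (0:ℝ) < t := lt_of_lt_of_le one_pos ht
    have hsqrt : (0:ℝ) < Real.sqrt t := Real.sqrt_pos.mpr ht0
    have hs := summable_cc_smul Φ t
    have hs1 : Summable (fun n : ℕ => cc t (n+1) • Φ ^ (n+1)) :=
      (summable_nat_add_iff (f := fun n : ℕ => cc t n • Φ ^ n) 1).mpr hs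
    have hsa : Summable (fun n : ℕ => cc t n • Φ ^ (n+1)) := by
      have h := hs.mul_right Φ
      have heq : (fun n : ℕ => (cc t n • Φ ^ n) * Φ) = fun n : ℕ => cc t n • Φ ^ (n+1) := by
        funext n; rw [smul_mul_assoc, ← pow_succ]
      rwa [heq] at h
    have step1 : F Φ t * Φ = ∑' n : ℕ, cc t n • Φ ^ (n+1) := by
      unfold F
      rw [← Summable.tsum_mul_right Φ hs]
      congr 1 with n
      rw [smul_mul_assoc, ← pow_succ]
    have step2 : F Φ t = cc t 0 • Φ ^ 0 + ∑' n : ℕ, cc t (n+1) • Φ ^ (n+1) := by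
      unfold F
      rw [Summable.tsum_eq_zero_add hs]
    have hdiff : F Φ t * Φ - F Φ t =
        (∑' n : ℕ, (cc t n - cc t (n+1)) • Φ ^ (n+1)) - cc t 0 • Φ ^ 0 := by
      rw [step1, step2]
      have h : (fun n : ℕ => (cc t n - cc t (n+1)) • Φ ^ (n+1)) =
          fun n : ℕ => cc t n • Φ ^ (n+1) - cc t (n+1) • Φ ^ (n+1) := by
        funext n; rw [sub_smul]
      rw [h, Summable.tsum_sub hsa hs1]
      abel
    -- termwise bound for the series part
    have habs : ∀ n : ℕ, ‖cc t n - cc t (n+1)‖ = pois t (n+1) * |((n:ℝ)+1) - t| / t := by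
      intro n
      rw [cc_real, cc_real, ← Complex.ofReal_sub, Complex.norm_real, Real.norm_eq_abs]
      have h0 : Real.exp (-t) * (t ^ n / (n !:ℝ)) = pois t n := rfl
      have h1 : Real.exp (-t) * (t ^ (n+1) / ((n+1)!:ℝ)) = pois t (n+1) := rfl
      rw [h0, h1, pois_diff ht0 n, abs_div, abs_mul,
        abs_of_nonneg (pois_nonneg ht0.le _), abs_of_nonneg ht0.le]
    have hterm : ∀ n : ℕ, ‖(cc t n - cc t (n+1)) • Φ ^ (n+1)‖ ≤
        (pois t (n+1) * |((n:ℝ)+1) - t|) * (K / t) := by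
      intro n
      rw [norm_smul, habs n, div_mul_eq_mul_div, mul_div_assoc]
      have ha : (0:ℝ) ≤ pois t (n+1) * |((n:ℝ)+1) - t| :=
        mul_nonneg (pois_nonneg ht0.le _) (abs_nonneg _)
      exact mul_le_mul_of_nonneg_left ((div_le_div_iff_of_pos_right ht0).mpr (hK (n+1))) ha
    -- summability of the bounding series
    have hshiftsum : Summable (fun n : ℕ => pois t (n+1) * |((n:ℝ)+1) - t|) := by
      have h := (summable_nat_add_iff 1).mpr (summable_absdev ht0.le)
      have heq : (fun n : ℕ => pois t (n+1) * |((n+1:ℕ):ℝ) - t|) =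
          fun n : ℕ => pois t (n+1) * |((n:ℝ)+1) - t| := by
        funext n; push_cast; ring_nf
      rwa [heq] at h
    have hbsum : Summable (fun n : ℕ => (pois t (n+1) * |((n:ℝ)+1) - t|) * (K / t)) :=
      hshiftsum.mul_right _
    have hnsum : Summable (fun n : ℕ => ‖(cc t n - cc t (n+1)) • Φ ^ (n+1)‖) :=
      Summable.of_nonneg_of_le (fun n => norm_nonneg _) hterm hbsum
    have hshift_le : ∑' n : ℕ, pois t (n+1) * |((n:ℝ)+1) - t| ≤ Real.sqrt t := by
      have h0 := Summable.tsum_eq_zero_add (summable_absdev ht0.le)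
      have hterm0 : (0:ℝ) ≤ pois t 0 * |((0:ℕ):ℝ) - t| :=
        mul_nonneg (pois_nonneg ht0.le _) (abs_nonneg _)
      have heq : (fun n : ℕ => pois t (n+1) * |((n+1:ℕ):ℝ) - t|) =
          fun n : ℕ => pois t (n+1) * |((n:ℝ)+1) - t| := by
        funext n; push_cast; ring_nf
      rw [heq] at h0
      have := tsum_absdev ht
      linarith [this, h0.symm.le]
    have hseries : ‖∑' n : ℕ, (cc t n - cc t (n+1)) • Φ ^ (n+1)‖ ≤ K / Real.sqrt t := by
      have heq2 : Real.sqrt t * (K / t) = K / Real.sqrt t := by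
        have h2 : Real.sqrt t * Real.sqrt t = t := Real.mul_self_sqrt ht0.le
        field_simp
        nlinarith [h2]
      calc ‖∑' n : ℕ, (cc t n - cc t (n+1)) • Φ ^ (n+1)‖
          ≤ ∑' n : ℕ, ‖(cc t n - cc t (n+1)) • Φ ^ (n+1)‖ := norm_tsum_le_tsum_norm hnsum
        _ ≤ ∑' n : ℕ, (pois t (n+1) * |((n:ℝ)+1) - t|) * (K / t) :=
            Summable.tsum_le_tsum hterm hnsum hbsum
        _ = (∑' n : ℕ, pois t (n+1) * |((n:ℝ)+1) - t|) * (K / t) := tsum_mul_right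
        _ ≤ Real.sqrt t * (K / t) :=
            mul_le_mul_of_nonneg_right hshift_le (by positivity)
        _ = K / Real.sqrt t := heq2
    have hzero : ‖cc t 0 • Φ ^ 0‖ ≤ K / Real.sqrt t := by
      rw [norm_smul, abs_cc ht0.le]
      have hp0 : pois t 0 = Real.exp (-t) := by unfold pois ee; simp
      have hexp : Real.exp (-t) ≤ 1 / Real.sqrt t := by
        have h1 : (1:ℝ) ≤ Real.sqrt t := by
          rw [show (1:ℝ) = Real.sqrt 1 by simp]
          exact Real.sqrt_le_sqrt ht
        have h2 : Real.sqrt t ≤ t := by nlinarith [Real.mul_self_sqrt ht0.le]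
        have h3 : Real.sqrt t ≤ Real.exp t := h2.trans (by linarith [Real.add_one_le_exp t])
        calc Real.exp (-t) = 1 / Real.exp t := by rw [Real.exp_neg, one_div]
          _ ≤ 1 / Real.sqrt t := one_div_le_one_div_of_le hsqrt h3
      rw [hp0]
      calc Real.exp (-t) * ‖Φ ^ 0‖ ≤ (1 / Real.sqrt t) * K :=
          mul_le_mul hexp (hK 0) (norm_nonneg _) (by positivity)
        _ = K / Real.sqrt t := by ring
    calc ‖F Φ t * Φ - F Φ t‖ ≤ ‖∑' n : ℕ, (cc t n - cc t (n+1)) • Φ ^ (n+1)‖ +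
          ‖cc t 0 • Φ ^ 0‖ := by rw [hdiff]; exact norm_sub_le _ _
      _ ≤ K / Real.sqrt t + K / Real.sqrt t := add_le_add hseries hzero
      _ = 2 * K / Real.sqrt t := by ring
  -- squeeze
  have hsq : Tendsto Real.sqrt atTop atTop := by
    rw [show Real.sqrt = fun x : ℝ => x ^ (1/(2:ℝ)) from funext Real.sqrt_eq_rpow]
    exact tendsto_rpow_atTop (by norm_num)
  have hlim : Tendsto (fun t : ℝ => 2 * K / Real.sqrt t) atTop (nhds 0) := by
    have h1 : Tendsto (fun t : ℝ => (Real.sqrt t)⁻¹) atTop (nhds 0) :=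
      hsq.inv_tendsto_atTop
    have h2 := h1.const_mul (2 * K)
    rw [mul_zero] at h2
    refine h2.congr fun t => ?_
    rw [div_eq_mul_inv]
  apply squeeze_zero_norm' ?_ hlim
  filter_upwards [eventually_ge_atTop (1:ℝ)] with t ht
  exact key t ht

theorem F_mul_fixed {Φ P : Mat} (hP : Φ * P = P) (t : ℝ) : F Φ t * P = P := by
  have hpow : ∀ m : ℕ, Φ ^ m * P = P := by
    intro m
    induction m with
    | zero => simp
    | succ m ih => rw [pow_succ', mul_assoc, ih, hP]
  unfold F
  rw [← Summable.tsum_mul_right P (summable_cc_smul Φ t)]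
  have h : (fun n : ℕ => (cc t n • Φ ^ n) * P) = fun n : ℕ => cc t n • P := by
    funext n; rw [smul_mul_assoc, hpow]
  rw [h, Summable.tsum_smul_const (summable_cc t), tsum_cc, one_smul]

theorem fixed_mul_F {Φ P : Mat} (hP : P * Φ = P) (t : ℝ) : P * F Φ t = P := by
  have hpow : ∀ m : ℕ, P * Φ ^ m = P := by
    intro m
    induction m with
    | zero => simp
    | succ m ih => rw [pow_succ, ← mul_assoc, ih, hP]
  unfold F
  rw [← Summable.tsum_mul_left P (summable_cc_smul Φ t)]
  have h : (fun n : ℕ => P * (cc t n • Φ ^ n)) = fun n : ℕ => cc t n • P := by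
    funext n; rw [mul_smul_comm, hpow]
  rw [h, Summable.tsum_smul_const (summable_cc t), tsum_cc, one_smul]

theorem main_aux (Φ : Mat)
    (hbound : ∃ C : ℝ, 0 ≤ C ∧ ∀ m : ℕ, ∀ i j : Fin N, ‖(Φ ^ m) i j‖ ≤ C) :
    ∃ P : Mat, P * P = P ∧ Φ * P = P ∧ P * Φ = P ∧
      Tendsto (fun t : ℝ => exp (t • (Φ - 1))) atTop (nhds P) := by
  obtain ⟨C, hC0, hC⟩ := hbound
  rcases Nat.eq_zero_or_pos N with hN | hN
  · subst hN
    refine ⟨0, Subsingleton.elim _ _, Subsingleton.elim _ _, Subsingleton.elim _ _, ?_⟩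
    have h : (fun t : ℝ => exp (t • (Φ - 1))) = fun _ => 0 :=
      funext fun t => Subsingleton.elim _ _
    rw [h]
    exact tendsto_const_nhds
  haveI : Nonempty (Fin N) := ⟨⟨0, hN⟩⟩
  haveI : ProperSpace Mat := FiniteDimensional.proper ℂ Mat
  set K : ℝ := N * C with hKdef
  have hC1 : (1:ℝ) ≤ C := by
    have h := hC 0 ⟨0, hN⟩ ⟨0, hN⟩
    simpa using h
  have hK1 : (1:ℝ) ≤ K := by
    have hN1 : (1:ℝ) ≤ (N:ℝ) := by exact_mod_cast hN
    calc (1:ℝ) = 1 * 1 := by norm_num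
      _ ≤ (N:ℝ) * C := mul_le_mul hN1 hC1 zero_le_one (by positivity)
  have hK0 : (0:ℝ) ≤ K := zero_le_one.trans hK1
  have hK : ∀ m : ℕ, ‖Φ ^ m‖ ≤ K := fun m => norm_entrywise_le hC0 (hC m)
  have hball : ∀ᶠ t : ℝ in atTop, F Φ t ∈ Metric.closedBall (0 : Mat) K := by
    filter_upwards [eventually_ge_atTop (0:ℝ)] with t ht
    rw [Metric.mem_closedBall, dist_zero_right]
    exact norm_F_le hK0 hK ht
  have hcomp : IsCompact (Metric.closedBall (0:Mat) K) := isCompact_closedBall _ _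
  have hlimit : ∀ U : Ultrafilter ℝ, ↑U ≤ (atTop : Filter ℝ) →
      ∃ Q : Mat, Tendsto (F Φ) (↑U) (nhds Q) := by
    intro U hU
    have hmem : Metric.closedBall (0:Mat) K ∈ Ultrafilter.map (F Φ) U :=
      Filter.mem_map.mpr (hU hball)
    obtain ⟨Q, _, hQ⟩ := hcomp.ultrafilter_le_nhds (Ultrafilter.map (F Φ) U)
      (Filter.le_principal_iff.mpr hmem)
    exact ⟨Q, hQ⟩
  have hfix : ∀ (U : Ultrafilter ℝ), ↑U ≤ (atTop : Filter ℝ) → ∀ Q : Mat,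
      Tendsto (F Φ) (↑U) (nhds Q) → Φ * Q = Q ∧ Q * Φ = Q := by
    intro U hU Q hQ
    have h1 : Tendsto (fun t : ℝ => F Φ t * Φ - F Φ t) (↑U) (nhds (Q * Φ - Q)) :=
      (hQ.mul tendsto_const_nhds).sub hQ
    have h2 : Tendsto (fun t : ℝ => F Φ t * Φ - F Φ t) (↑U) (nhds 0) :=
      (tendsto_F_mul_sub hK1 hK).mono_left hU
    have hQΦ : Q * Φ = Q := by
      have h3 := tendsto_nhds_unique h1 h2
      rwa [sub_eq_zero] at h3
    refine ⟨?_, hQΦ⟩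
    have h5 : Tendsto (fun t : ℝ => Φ * F Φ t) (↑U) (nhds (Φ * Q)) :=
      tendsto_const_nhds.mul hQ
    have h6 : Tendsto (fun t : ℝ => Φ * F Φ t) (↑U) (nhds (Q * Φ)) := by
      have hcm : (fun t : ℝ => Φ * F Φ t) = fun t : ℝ => F Φ t * Φ :=
        funext fun t => comm_F Φ t
      rw [hcm]
      exact hQ.mul tendsto_const_nhds
    rw [tendsto_nhds_unique h5 h6, hQΦ]
  have huniq : ∀ (U U' : Ultrafilter ℝ), ↑U ≤ (atTop : Filter ℝ) →
      ↑U' ≤ (atTop : Filter ℝ) → ∀ Q Q' : Mat, Tendsto (F Φ) (↑U) (nhds Q) →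
      Tendsto (F Φ) (↑U') (nhds Q') → Q = Q' := by
    intro U U' hU hU' Q Q' hQ hQ'
    have e1 : Tendsto (fun t : ℝ => Q * F Φ t) (↑U') (nhds (Q * Q')) :=
      tendsto_const_nhds.mul hQ'
    have e2 : (fun t : ℝ => Q * F Φ t) = fun _ => Q :=
      funext fun t => fixed_mul_F (hfix U hU Q hQ).2 t
    have e3 : Q * Q' = Q := tendsto_nhds_unique e1 (by rw [e2]; exact tendsto_const_nhds)
    have e4 : Tendsto (fun t : ℝ => F Φ t * Q') (↑U) (nhds (Q * Q')) :=
      hQ.mul tendsto_const_nhds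
    have e5 : (fun t : ℝ => F Φ t * Q') = fun _ => Q' :=
      funext fun t => F_mul_fixed (hfix U' hU' Q' hQ').1 t
    have e6 : Q * Q' = Q' := tendsto_nhds_unique e4 (by rw [e5]; exact tendsto_const_nhds)
    exact e3.symm.trans e6
  obtain ⟨P, hP⟩ := hlimit (Ultrafilter.of atTop) (Ultrafilter.of_le _)
  have hPfix := hfix _ (Ultrafilter.of_le _) P hP
  have hPP : P * P = P := by
    have e1 : Tendsto (fun t : ℝ => P * F Φ t) (↑(Ultrafilter.of (atTop : Filter ℝ)))
        (nhds (P * P)) := tendsto_const_nhds.mul hP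
    have e2 : (fun t : ℝ => P * F Φ t) = fun _ => P :=
      funext fun t => fixed_mul_F hPfix.2 t
    exact tendsto_nhds_unique e1 (by rw [e2]; exact tendsto_const_nhds)
  refine ⟨P, hPP, hPfix.1, hPfix.2, ?_⟩
  have hrepr : (fun t : ℝ => exp (t • (Φ - 1))) = F Φ := funext fun t => repr_exp Φ t
  rw [hrepr, tendsto_iff_ultrafilter]
  intro U hU
  obtain ⟨Q, hQ⟩ := hlimit U hU
  have : Q = P := huniq U (Ultrafilter.of atTop) hU (Ultrafilter.of_le _) Q P hQ hP
  rwa [this] at hQ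

end Matrices2

end SCP

/-- If the powers of a complex matrix `Φ` are uniformly bounded (as happens for the
superoperator of a quantum channel), then `exp(t • (Φ − 1))` converges, as `t → ∞`, to a matrix
`P` which is a projection (`P·P = P`) absorbing `Φ` on both sides (`Φ·P = P·Φ = P`), namely the
projection onto the subspace of vectors fixed by `Φ`. -/
theorem semigroup_of_channel_tendsto_projection
    {N : ℕ} (Φ : Matrix (Fin N) (Fin N) ℂ)
    (hbound : ∃ C : ℝ, 0 ≤ C ∧ ∀ m : ℕ, ∀ i j : Fin N, ‖(Φ ^ m) i j‖ ≤ C) :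
    ∃ P : Matrix (Fin N) (Fin N) ℂ, P * P = P ∧ Φ * P = P ∧ P * Φ = P ∧
      Filter.Tendsto (fun t : ℝ => NormedSpace.exp (t • (Φ - 1)))
        Filter.atTop (nhds P) :=
  SCP.main_aux Φ hbound
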